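/- Let (Ω, 𝓕, P) be a probability space and let X_1, …, X_n be independent identically distributed nonnegative real random variables. Let q, L, σ > 0 be reals and suppose E[exp(X_1/(qL²))] ≤ 1 + σ²/L². Then P(X_1 + ⋯ + X_n > 2nqσ²) ≤ 2·exp(−nσ²/(3L²)). -/

import Mathlib

open MeasureTheory ProbabilityTheory

/-- Lemma B.5 with explicit constants: for i.i.d. nonnegative random variables with
`E[exp(X₁/(qL²))] ≤ 1 + σ²/L²`, one has
`P(X₁ + ⋯ + Xₙ > 2nqσ²) ≤ 2 exp(−nσ²/(3L²))`. -/
theorem sum_tail_bound {Ω : Type*} [MeasurableSpace Ω]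
    (P : Measure Ω) [IsProbabilityMeasure P]
    (n : ℕ) (hn : 1 ≤ n) (X : Fin n → Ω → ℝ)
    (hmeas : ∀ i, Measurable (X i))
    (hnonneg : ∀ i, ∀ᵐ ω ∂P, 0 ≤ X i ω)
    (hindep : iIndepFun X P)
    (hident : ∀ i j, IdentDistrib (X i) (X j) P P)
    (q L σ : ℝ) (hq : 0 < q) (hL : 0 < L) (hσ : 0 < σ)
    (hint : ∀ i, Integrable (fun ω => Real.exp (X i ω / (q * L ^ 2))) P)
    (hbound : ∀ i, (∫ ω, Real.exp (X i ω / (q * L ^ 2)) ∂P) ≤ 1 + σ ^ 2 / L ^ 2) :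
    P {ω | 2 * n * q * σ ^ 2 < ∑ i, X i ω}
      ≤ ENNReal.ofReal (2 * Real.exp (-(n * σ ^ 2) / (3 * L ^ 2))) := by
  set t : ℝ := (q * L ^ 2)⁻¹ with ht_def
  have hqL : 0 < q * L ^ 2 := by positivity
  have ht : 0 < t := by positivity
  have hrw : ∀ i, (fun ω => Real.exp (t * X i ω)) = fun ω => Real.exp (X i ω / (q * L ^ 2)) := by
    intro i; funext ω; rw [ht_def, div_eq_mul_inv, mul_comm]
  have hint' : ∀ i, Integrable (fun ω => Real.exp (t * X i ω)) P := by
    intro i; rw [hrw i]; exact hint i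
  set S : Ω → ℝ := ∑ i, X i with hS
  have hSint : Integrable (fun ω => Real.exp (t * S ω)) P :=
    hindep.integrable_exp_mul_sum hmeas (fun i _ => hint' i)
  set ε : ℝ := 2 * n * q * σ ^ 2 with hε
  have hmarkov := measure_ge_le_exp_mul_mgf (μ := P) (X := S) (t := t) ε ht.le hSint
  have hmgf : mgf S P t = ∏ i, mgf (X i) P t := hindep.mgf_sum hmeas Finset.univ
  have hBnn : (0 : ℝ) ≤ 1 + σ ^ 2 / L ^ 2 := by positivity
  have hprod : mgf S P t ≤ (1 + σ ^ 2 / L ^ 2) ^ n := by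
    rw [hmgf]
    calc ∏ i, mgf (X i) P t ≤ ∏ _i : Fin n, (1 + σ ^ 2 / L ^ 2) := by
          refine Finset.prod_le_prod (fun i _ => mgf_nonneg) (fun i _ => ?_)
          have := hbound i
          rw [mgf]
          simp only [hrw i]
          exact this
      _ = (1 + σ ^ 2 / L ^ 2) ^ n := by simp
  have hpow : (1 + σ ^ 2 / L ^ 2) ^ n ≤ Real.exp (n * (σ ^ 2 / L ^ 2)) := by
    rw [Real.exp_nat_mul]
    exact pow_le_pow_left₀ hBnn (by linarith [Real.add_one_le_exp (σ ^ 2 / L ^ 2)]) n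
  have hL2 : (0:ℝ) < L ^ 2 := by positivity
  have htε : -t * ε = -(2 * n * σ ^ 2 / L ^ 2) := by
    rw [ht_def, hε]; field_simp
  have hfinal : Real.exp (-t * ε) * mgf S P t ≤ 2 * Real.exp (-(n * σ ^ 2) / (3 * L ^ 2)) := by
    calc Real.exp (-t * ε) * mgf S P t
        ≤ Real.exp (-t * ε) * Real.exp (n * (σ ^ 2 / L ^ 2)) := by
          refine mul_le_mul_of_nonneg_left (hprod.trans hpow) (Real.exp_nonneg _)
      _ = Real.exp (-(n * σ ^ 2) / L ^ 2) := by
          rw [htε, ← Real.exp_add]; congr 1; field_simp; ring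
      _ ≤ 2 * Real.exp (-(n * σ ^ 2) / (3 * L ^ 2)) := by
          have h1 : Real.exp (-(n * σ ^ 2) / L ^ 2) ≤ Real.exp (-(n * σ ^ 2) / (3 * L ^ 2)) := by
            apply Real.exp_le_exp.mpr
            rw [div_le_div_iff₀ hL2 (by positivity)]
            nlinarith [sq_nonneg σ, Nat.cast_nonneg (α := ℝ) n, sq_nonneg (σ * L), mul_nonneg (Nat.cast_nonneg (α := ℝ) n) (sq_nonneg σ), sq_nonneg L]
          nlinarith [Real.exp_nonneg (-(n * σ ^ 2) / (3 * L ^ 2))]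
  have hsub : P {ω | ε < S ω} ≤ P {ω | ε ≤ S ω} :=
    measure_mono (fun ω hω => le_of_lt (Set.mem_setOf_eq ▸ hω))
  calc P {ω | 2 * n * q * σ ^ 2 < ∑ i, X i ω} = P {ω | ε < S ω} := by
        congr 1; ext ω; simp [hε, hS, Finset.sum_apply]
    _ ≤ P {ω | ε ≤ S ω} := hsub
    _ = ENNReal.ofReal (P {ω | ε ≤ S ω}).toReal := (ENNReal.ofReal_toReal (measure_ne_top _ _)).symm
    _ ≤ ENNReal.ofReal (2 * Real.exp (-(n * σ ^ 2) / (3 * L ^ 2))) :=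
        ENNReal.ofReal_le_ofReal (hmarkov.trans hfinal)
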